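/- Let c ≥ 1 and let H_{j,l} (for c ≤ j ≤ 2c and 1 ≤ l ≤ 4) be complement-connected graphs such that H_{j,l} has order j and, for any two distinct index pairs (j,l) ≠ (j',l'), the graph H_{j,l} is not embeddable into H_{j',l'}. Let G be a connected uniform inclusion-free graph of rank i all of whose cocomponents are isomorphic to one of H_{c,1}, H_{c,2}, H_{c,3}, H_{c,4}. Let G' be obtained from G by replacing each cocomponent A ≅ H_{c,l} with a copy of H_{j,l}, where j ∈ [c, 2c] may depend on A. Then G' is a connected uniform inclusion-free graph of rank i. -/

import Mathlib

namespace PaperFO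

variable {V : Type}

/-- The adjacency relation at decomposition depth `i`: distinct vertices
`x, y` lying in a common member `F` of the depth-`i` decomposition `Dec^i G`
are adjacent in `F` iff `{x,y} ∈^{i+1} E(G)`, i.e. iff `G.Adj x y ↔ Even i`. -/
def parityAdj (G : SimpleGraph V) (i : ℕ) (x y : V) : Prop :=
  x ≠ y ∧ (G.Adj x y ↔ Even i)

/-- `cellRel G i x y` says that `x` and `y` lie in the same member of the
depth-`i` decomposition `Dec^i G` of `G` (for a connected graph `G`); these
vertex sets are the cells of the partition `P_i` of the paper. -/
def cellRel (G : SimpleGraph V) : ℕ → V → V → Prop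
  | 0 => Relation.ReflTransGen (fun a b => parityAdj G 0 a b)
  | i + 1 => Relation.ReflTransGen (fun a b => cellRel G i a b ∧ parityAdj G (i + 1) a b)

/-- The member of `Dec^i G` containing the vertex `v`, as a graph: the
depth-`i` environment `env_i(v; G)` of `v`. -/
def envGraph (G : SimpleGraph V) (i : ℕ) (v : V) :
    SimpleGraph {u : V // cellRel G i v u} where
  Adj x y := parityAdj G i x.1 y.1
  symm := ⟨fun x y h => ⟨h.1.symm, (G.adj_comm y.1 x.1).trans h.2⟩⟩
  loopless := ⟨fun x h => h.1 rfl⟩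

/-- The rank of a connected graph `G`: the smallest `k` such that the
partition `P_{k+1}` coincides with `P_k` (equivalently, such that `P_k`
consists of the vertex sets of the cocomponents of `G`). -/
noncomputable def rank (G : SimpleGraph V) : ℕ :=
  sInf {k : ℕ | ∀ x y : V, cellRel G (k + 1) x y ↔ cellRel G k x y}

/-- A connected graph `G` of rank `k` is uniform if `Dec^{k-1} G` contains no
complement-connected graph, i.e. every depth-`(k-1)` cell splits further;
every complement-connected graph (rank `0`) is uniform. -/
def Uniform (G : SimpleGraph V) : Prop :=
  rank G = 0 ∨
    ∀ x : V, ∃ y : V, cellRel G (rank G - 1) x y ∧ ¬ cellRel G (rank G) x y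

/-- A connected graph `G` of rank `k` is inclusion-free if for every
`0 ≤ i ≤ k`: (1) for any `K ∈ Dec^i G`, no two distinct connected components
of the complement of `K` are isomorphic; (2) no member of `Dec^i G` is
properly embeddable into another (embeddable implies isomorphic). -/
def InclusionFree (G : SimpleGraph V) : Prop :=
  ∀ i ≤ rank G,
    (∀ x y : V, cellRel G i x y → ¬ cellRel G (i + 1) x y →
      ¬ Nonempty (envGraph G (i + 1) x ≃g envGraph G (i + 1) y)) ∧
    (∀ x y : V, Nonempty (envGraph G i x ↪g envGraph G i y) →
      Nonempty (envGraph G i x ≃g envGraph G i y))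

/-- A graph is complement-connected if both it and its complement are
connected (in particular its vertex set is nonempty). -/
def CoConnected (G : SimpleGraph V) : Prop := G.Connected ∧ (Gᶜ).Connected

/-- A cocomponent of `G`: an inclusion-maximal complement-connected induced
subgraph of `G`, given by its vertex set `S`. -/
def IsCocomponent (G : SimpleGraph V) (S : Set V) : Prop :=
  CoConnected (G.induce S) ∧
    ∀ T : Set V, S ⊆ T → CoConnected (G.induce T) → T = S

end PaperFO


namespace PaperFO

variable {V : Type}

lemma parityAdj_symm {G : SimpleGraph V} {k : ℕ} {x y : V} (h : parityAdj G k x y) :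
    parityAdj G k y x := ⟨h.1.symm, (G.adj_comm y x).trans h.2⟩

lemma cellRel_zero (G : SimpleGraph V) :
    cellRel G 0 = Relation.ReflTransGen (fun a b => parityAdj G 0 a b) := rfl

lemma cellRel_succ (G : SimpleGraph V) (k : ℕ) :
    cellRel G (k + 1) =
      Relation.ReflTransGen (fun a b => cellRel G k a b ∧ parityAdj G (k + 1) a b) := rfl

lemma cellRel_refl (G : SimpleGraph V) (k : ℕ) (x : V) : cellRel G k x x := by
  cases k <;> exact Relation.ReflTransGen.refl

lemma cellRel_symm (G : SimpleGraph V) : ∀ k : ℕ, ∀ {x y : V}, cellRel G k x y → cellRel G k y x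
  | 0 => fun h => (@Relation.ReflTransGen.symmetric _ _ ⟨fun _ _ h => parityAdj_symm h⟩).symm _ _ h
  | k + 1 => fun h => (@Relation.ReflTransGen.symmetric _ _
      ⟨fun _ _ h => ⟨cellRel_symm G k h.1, parityAdj_symm h.2⟩⟩).symm _ _ h

lemma cellRel_trans {G : SimpleGraph V} {k : ℕ} {x y z : V} (h : cellRel G k x y)
    (h' : cellRel G k y z) : cellRel G k x z := by
  cases k with
  | zero => exact Relation.ReflTransGen.trans h h'
  | succ k => exact Relation.ReflTransGen.trans h h'

lemma induce_compl (G : SimpleGraph V) (S : Set V) : (G.induce S)ᶜ = (Gᶜ).induce S := by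
  ext a b
  simp only [SimpleGraph.compl_adj, SimpleGraph.comap_adj, Function.Embedding.coe_subtype,
    ne_eq, Subtype.ext_iff]


lemma reachable_induce_rtg {G : SimpleGraph V} {S : Set V} {x y : ↥S}
    (h : (G.induce S).Reachable x y) :
    Relation.ReflTransGen (fun u v : V => u ∈ S ∧ v ∈ S ∧ G.Adj u v) x.1 y.1 := by
  obtain ⟨w⟩ := h
  induction w with
  | nil => exact Relation.ReflTransGen.refl
  | @cons u v w h p ih => exact Relation.ReflTransGen.head ⟨u.2, v.2, h⟩ ih

lemma rtg_reachable_induce {G : SimpleGraph V} {S : Set V} {x y : V}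
    (h : Relation.ReflTransGen (fun u v : V => u ∈ S ∧ v ∈ S ∧ G.Adj u v) x y) (hx : x ∈ S) :
    ∃ hy : y ∈ S, (G.induce S).Reachable ⟨x, hx⟩ ⟨y, hy⟩ := by
  induction h with
  | refl => exact ⟨hx, SimpleGraph.Reachable.refl _⟩
  | @tail b c hr step ih =>
      obtain ⟨hb, r⟩ := ih
      exact ⟨step.2.1, r.trans (SimpleGraph.Adj.reachable (by exact step.2.2))⟩

end PaperFO

namespace PaperFO
section Transfer

variable {W C : Type} {G : SimpleGraph W} {Q : SimpleGraph C} {π : W → C}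

/-- A chain within one fiber realizing any given parity. -/
lemma fiber_chain (hfc : ∀ a : C, CoConnected (G.induce {x | π x = a}))
    (k : ℕ) {x y : W} (h : π x = π y) :
    Relation.ReflTransGen (fun u v => π u = π y ∧ π v = π y ∧ parityAdj G k u v) x y := by
  rcases Nat.even_or_odd k with hk | hk
  · have hconn := (hfc (π y)).1
    have hr := reachable_induce_rtg
      (hconn.preconnected (⟨x, h⟩ : {x | π x = π y}) ⟨y, rfl⟩)
    refine Relation.ReflTransGen.mono ?_ _ _ hr
    exact fun u v hu => ⟨hu.1, hu.2.1, hu.2.2.ne, iff_of_true hu.2.2 hk⟩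
  · have hconn := (hfc (π y)).2
    rw [induce_compl] at hconn
    have hr := reachable_induce_rtg
      (hconn.preconnected (⟨x, h⟩ : {x | π x = π y}) ⟨y, rfl⟩)
    refine Relation.ReflTransGen.mono ?_ _ _ hr
    intro u v hu
    refine ⟨hu.1, hu.2.1, hu.2.2.ne, ?_⟩
    have := ((SimpleGraph.compl_adj _ _ _).mp hu.2.2).2
    exact iff_of_false this (Nat.not_even_iff_odd.mpr hk)

lemma intra_cellRel (hfc : ∀ a : C, CoConnected (G.induce {x | π x = a})) :
    ∀ (k : ℕ) {x y : W}, π x = π y → cellRel G k x y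
  | 0 => fun h => by
      refine Relation.ReflTransGen.mono ?_ _ _ (fiber_chain hfc 0 h); exact fun _ _ hv => hv.2.2
  | k + 1 => fun h => by
      refine Relation.ReflTransGen.mono ?_ _ _ (fiber_chain hfc (k + 1) h)
      exact (fun _ _ hv => ⟨intra_cellRel hfc k (hv.1.trans hv.2.1.symm), hv.2.2⟩)

lemma fiber_nonempty (hfc : ∀ a : C, CoConnected (G.induce {x | π x = a})) (a : C) :
    ∃ x : W, π x = a := by
  obtain ⟨⟨x, hx⟩⟩ := (hfc a).1.nonempty
  exact ⟨x, hx⟩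

theorem cell_transfer (hcr : ∀ x y : W, π x ≠ π y → (G.Adj x y ↔ Q.Adj (π x) (π y)))
    (hfc : ∀ a : C, CoConnected (G.induce {x | π x = a})) :
    ∀ (k : ℕ), (∀ x y : W, cellRel G k x y → cellRel Q k (π x) (π y)) ∧
      (∀ (x : W) (b : C), cellRel Q k (π x) b → ∀ y : W, π y = b → cellRel G k x y) := by
  intro k
  induction k with
  | zero =>
      constructor
      · intro x y h
        rw [cellRel_zero] at h ⊢
        induction h with
        | refl => exact Relation.ReflTransGen.refl
        | @tail b c hr step ih =>
            by_cases hpq : π b = π c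
            · exact hpq ▸ ih
            · exact ih.tail ⟨hpq, (hcr b c hpq).symm.trans step.2⟩
      · intro x b h
        rw [cellRel_zero] at h
        induction h with
        | refl => exact fun y hy => intra_cellRel hfc 0 hy.symm
        | @tail p q hr step ih =>
            intro y hy
            obtain ⟨u, hu⟩ := fiber_nonempty hfc p
            have h1 : cellRel G 0 x u := ih u hu
            have hne : π u ≠ π y := by rw [hu, hy]; exact step.1
            have h2 : parityAdj G 0 u y :=
              ⟨fun e => hne (e ▸ rfl), (hcr u y hne).trans (by rw [hu, hy]; exact step.2)⟩
            exact Relation.ReflTransGen.tail h1 h2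
  | succ k ihk =>
      constructor
      · intro x y h
        rw [cellRel_succ] at h ⊢
        induction h with
        | refl => exact Relation.ReflTransGen.refl
        | @tail b c hr step ih =>
            by_cases hpq : π b = π c
            · exact hpq ▸ ih
            · exact ih.tail ⟨ihk.1 b c step.1, hpq, (hcr b c hpq).symm.trans step.2.2⟩
      · intro x b h
        rw [cellRel_succ] at h
        induction h with
        | refl => exact fun y hy => intra_cellRel hfc (k + 1) hy.symm
        | @tail p q hr step ih =>
            intro y hy
            obtain ⟨u, hu⟩ := fiber_nonempty hfc p
            have h1 : cellRel G (k + 1) x u := ih u hu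
            have hne : π u ≠ π y := by rw [hu, hy]; exact step.2.1
            have h0 : cellRel G k u y := ihk.2 u q (hu ▸ step.1) y hy
            have h2 : parityAdj G (k + 1) u y :=
              ⟨fun e => hne (e ▸ rfl), (hcr u y hne).trans (by rw [hu, hy]; exact step.2.2)⟩
            exact Relation.ReflTransGen.tail h1 ⟨h0, h2⟩

theorem cellRel_iff (hcr : ∀ x y : W, π x ≠ π y → (G.Adj x y ↔ Q.Adj (π x) (π y)))
    (hfc : ∀ a : C, CoConnected (G.induce {x | π x = a})) (k : ℕ) (x y : W) :
    cellRel G k x y ↔ cellRel Q k (π x) (π y) :=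
  ⟨fun h => (cell_transfer hcr hfc k).1 x y h,
   fun h => (cell_transfer hcr hfc k).2 x (π y) h y rfl⟩

theorem rank_eq_quot (hcr : ∀ x y : W, π x ≠ π y → (G.Adj x y ↔ Q.Adj (π x) (π y)))
    (hfc : ∀ a : C, CoConnected (G.induce {x | π x = a})) :
    rank G = sInf {k : ℕ | ∀ a b : C, cellRel Q (k + 1) a b ↔ cellRel Q k a b} := by
  unfold rank
  congr 1
  ext k
  constructor
  · intro h a b
    obtain ⟨x, hx⟩ := fiber_nonempty hfc a
    obtain ⟨y, hy⟩ := fiber_nonempty hfc b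
    rw [← hx, ← hy, ← cellRel_iff hcr hfc, ← cellRel_iff hcr hfc]
    exact h x y
  · intro h x y
    rw [cellRel_iff hcr hfc, cellRel_iff hcr hfc]
    exact h _ _

end Transfer
end PaperFO
namespace PaperFO
section Blowup

variable {W W' C : Type} {G : SimpleGraph W} {Q : SimpleGraph C} {π : W → C}

lemma coConnected_compl {G : SimpleGraph W} (h : CoConnected G) : CoConnected Gᶜ :=
  ⟨h.2, by rw [compl_compl]; exact h.1⟩

lemma cross_compl (hcr : ∀ x y : W, π x ≠ π y → (G.Adj x y ↔ Q.Adj (π x) (π y))) :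
    ∀ x y : W, π x ≠ π y → (Gᶜ.Adj x y ↔ Qᶜ.Adj (π x) (π y)) := by
  intro x y h
  have hxy : x ≠ y := fun e => h (e ▸ rfl)
  rw [SimpleGraph.compl_adj, SimpleGraph.compl_adj, hcr x y h]
  tauto

/-- Lifting a chain of fibers to a chain of vertices. -/
lemma blowup_rtg (hcr : ∀ x y : W, π x ≠ π y → (G.Adj x y ↔ Q.Adj (π x) (π y)))
    (hfconn : ∀ a : C, (G.induce {x | π x = a}).Connected)
    (hfne : ∀ a : C, ∃ x : W, π x = a) {D : Set C}
    (hD : ∀ a b : C, a ∈ D → b ∈ D →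
      Relation.ReflTransGen (fun p q => p ∈ D ∧ q ∈ D ∧ Q.Adj p q) a b)
    {u v : W} (hu : π u ∈ D) (hv : π v ∈ D) :
    Relation.ReflTransGen (fun x y => π x ∈ D ∧ π y ∈ D ∧ G.Adj x y) u v := by
  have key : ∀ b : C, Relation.ReflTransGen (fun p q => p ∈ D ∧ q ∈ D ∧ Q.Adj p q) (π u) b →
      ∀ z : W, π z = b →
      Relation.ReflTransGen (fun x y => π x ∈ D ∧ π y ∈ D ∧ G.Adj x y) u z := by
    intro b hb
    induction hb with
    | refl =>
        intro z hz
        have hr := reachable_induce_rtg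
          ((hfconn (π u)).preconnected (⟨u, rfl⟩ : {x | π x = π u}) ⟨z, hz⟩)
        refine Relation.ReflTransGen.mono ?_ _ _ hr
        exact (fun x y hx => ⟨by rw [show π x = π u from hx.1]; exact hu,
          by rw [show π y = π u from hx.2.1]; exact hu, hx.2.2⟩)
    | @tail p q hr step ih =>
        intro z hz
        obtain ⟨w, hw⟩ := hfne p
        have h1 := ih w hw
        have hne : π w ≠ π z := by rw [hw, hz]; exact step.2.2.ne
        refine h1.tail ⟨by rw [hw]; exact step.1, by rw [hz]; exact step.2.1, ?_⟩
        rw [hcr w z hne, hw, hz]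
        exact step.2.2
  exact key (π v) (hD _ _ hu hv) v rfl

lemma blowup_coconn (hcr : ∀ x y : W, π x ≠ π y → (G.Adj x y ↔ Q.Adj (π x) (π y)))
    (hfc : ∀ a : C, CoConnected (G.induce {x | π x = a})) {D : Set C}
    (hD1 : ∀ a b : C, a ∈ D → b ∈ D →
      Relation.ReflTransGen (fun p q => p ∈ D ∧ q ∈ D ∧ Q.Adj p q) a b)
    (hD2 : ∀ a b : C, a ∈ D → b ∈ D →
      Relation.ReflTransGen (fun p q => p ∈ D ∧ q ∈ D ∧ Qᶜ.Adj p q) a b)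
    (hne : D.Nonempty) :
    CoConnected (G.induce {x | π x ∈ D}) := by
  have hfne : ∀ a : C, ∃ x : W, π x = a := fiber_nonempty hfc
  obtain ⟨a0, ha0⟩ := hne
  obtain ⟨x0, hx0⟩ := hfne a0
  have hx0T : π x0 ∈ D := hx0 ▸ ha0
  constructor
  · rw [SimpleGraph.connected_iff]
    refine ⟨fun x y => ?_, ⟨⟨x0, hx0T⟩⟩⟩
    have := blowup_rtg hcr (fun a => (hfc a).1) hfne hD1 (u := x.1) (v := y.1) x.2 y.2
    obtain ⟨hy, hr⟩ := rtg_reachable_induce (G := G) (S := {x | π x ∈ D}) this x.2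
    exact hr
  · rw [induce_compl, SimpleGraph.connected_iff]
    refine ⟨fun x y => ?_, ⟨⟨x0, hx0T⟩⟩⟩
    have hfcc : ∀ a : C, CoConnected (Gᶜ.induce {x | π x = a}) := by
      intro a
      rw [← induce_compl]
      exact coConnected_compl (hfc a)
    have := blowup_rtg (cross_compl hcr) (fun a => (hfcc a).1) hfne hD2
      (u := x.1) (v := y.1) x.2 y.2
    obtain ⟨hy, hr⟩ := rtg_reachable_induce (G := Gᶜ) (S := {x | π x ∈ D}) this x.2
    exact hr

/-- Projecting a chain of vertices to a chain of fibers. -/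
lemma proj_rtg {G' : SimpleGraph W'} {π' : W' → C}
    (hcr' : ∀ x y : W', π' x ≠ π' y → (G'.Adj x y ↔ Q.Adj (π' x) (π' y)))
    {S : Set W'} {s t : W'}
    (h : Relation.ReflTransGen (fun u v => u ∈ S ∧ v ∈ S ∧ G'.Adj u v) s t) :
    Relation.ReflTransGen (fun p q => p ∈ π' '' S ∧ q ∈ π' '' S ∧ Q.Adj p q)
      (π' s) (π' t) := by
  induction h with
  | refl => exact Relation.ReflTransGen.refl
  | @tail b c hr step ih =>
      by_cases hpq : π' b = π' c
      · exact hpq ▸ ih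
      · exact ih.tail ⟨⟨b, step.1, rfl⟩, ⟨c, step.2.1, rfl⟩, (hcr' b c hpq).mp step.2.2⟩

/-- Any complement-connected induced subgraph of the replaced graph lies
within a single fiber. -/
lemma coconn_subset_fiber
    (hcr : ∀ x y : W, π x ≠ π y → (G.Adj x y ↔ Q.Adj (π x) (π y)))
    (hfib : ∀ a : C, IsCocomponent G {x : W | π x = a})
    {G' : SimpleGraph W'} {π' : W' → C}
    (hcr' : ∀ x y : W', π' x ≠ π' y → (G'.Adj x y ↔ Q.Adj (π' x) (π' y)))
    {S : Set W'} (hS : CoConnected (G'.induce S)) :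
    ∀ u v : W', u ∈ S → v ∈ S → π' u = π' v := by
  intro u v hu hv
  by_contra hne
  set D : Set C := π' '' S with hDdef
  have hfc : ∀ a : C, CoConnected (G.induce {x | π x = a}) := fun a => (hfib a).1
  have chain1 : ∀ a b : C, a ∈ D → b ∈ D →
      Relation.ReflTransGen (fun p q => p ∈ D ∧ q ∈ D ∧ Q.Adj p q) a b := by
    rintro a b ⟨s, hs, rfl⟩ ⟨t, ht, rfl⟩
    exact proj_rtg hcr' (reachable_induce_rtg (hS.1.preconnected ⟨s, hs⟩ ⟨t, ht⟩))
  have chain2 : ∀ a b : C, a ∈ D → b ∈ D →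
      Relation.ReflTransGen (fun p q => p ∈ D ∧ q ∈ D ∧ Qᶜ.Adj p q) a b := by
    rintro a b ⟨s, hs, rfl⟩ ⟨t, ht, rfl⟩
    have hc : (G'ᶜ.induce S).Connected := by rw [← induce_compl]; exact hS.2
    exact proj_rtg (cross_compl hcr') (reachable_induce_rtg (hc.preconnected ⟨s, hs⟩ ⟨t, ht⟩))
  have hTco := blowup_coconn hcr hfc chain1 chain2 ⟨π' u, ⟨u, hu, rfl⟩⟩
  have hsub : {x : W | π x = π' u} ⊆ {x : W | π x ∈ D} := by
    intro z hz
    rw [Set.mem_setOf_eq] at hz ⊢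
    rw [hz]
    exact ⟨u, hu, rfl⟩
  have hT := (hfib (π' u)).2 {x : W | π x ∈ D} hsub hTco
  obtain ⟨x1, hx1⟩ := fiber_nonempty hfc (π' v)
  have hx1T : x1 ∈ {x : W | π x ∈ D} := by
    rw [Set.mem_setOf_eq, hx1]
    exact ⟨v, hv, rfl⟩
  rw [hT, Set.mem_setOf_eq, hx1] at hx1T
  exact hne hx1T.symm

end Blowup
end PaperFO
namespace PaperFO
section IsoTools

variable {A B : Type} {GA : SimpleGraph A} {GB : SimpleGraph B}

/-- Complement of a graph isomorphism. -/
def isoCompl (e : GA ≃g GB) : GAᶜ ≃g GBᶜ where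
  toEquiv := e.toEquiv
  map_rel_iff' := by
    intro a b
    rw [SimpleGraph.compl_adj, SimpleGraph.compl_adj]
    constructor
    · rintro ⟨h1, h2⟩
      exact ⟨fun e' => h1 (e' ▸ rfl), fun ha => h2 (e.map_rel_iff.mpr ha)⟩
    · rintro ⟨h1, h2⟩
      exact ⟨fun e' => h1 (e.toEquiv.injective e'), fun ha => h2 (e.map_rel_iff.mp ha)⟩

lemma coConnected_iso (e : GA ≃g GB) (h : CoConnected GA) : CoConnected GB :=
  ⟨e.connected_iff.mp h.1, (isoCompl e).connected_iff.mp h.2⟩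

end IsoTools

section EmbTools

variable {V' : Type} {G' : SimpleGraph V'} {k : ℕ} {x' y' : V'}

lemma emb_pres (f : envGraph G' k x' ↪g envGraph G' k y')
    {u v : {w : V' // cellRel G' k x' w}} (h : u.1 ≠ v.1) :
    (f u).1 ≠ (f v).1 ∧ (G'.Adj u.1 v.1 ↔ G'.Adj (f u).1 (f v).1) := by
  have hne : f u ≠ f v := fun e => h (congrArg Subtype.val (f.injective e))
  have hne' : (f u).1 ≠ (f v).1 := fun e => hne (Subtype.ext e)
  have hp : parityAdj G' k (f u).1 (f v).1 ↔ parityAdj G' k u.1 v.1 := f.map_rel_iff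
  refine ⟨hne', ?_⟩
  unfold parityAdj at hp
  by_cases he : Even k <;> tauto

end EmbTools
end PaperFO
namespace PaperFO
section FiberMap

variable {V' C : Type} [Fintype V'] {G' : SimpleGraph V'} {Q : SimpleGraph C} {π' : V' → C}
  {k : ℕ} {x' y' : V'}

lemma emb_pres_all (f : envGraph G' k x' ↪g envGraph G' k y') {z w : V'}
    (hz : cellRel G' k x' z) (hw : cellRel G' k x' w) :
    G'.Adj (f ⟨z, hz⟩).1 (f ⟨w, hw⟩).1 ↔ G'.Adj z w := by
  by_cases h : z = w
  · subst h
    exact iff_of_false (SimpleGraph.irrefl G') (SimpleGraph.irrefl G')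
  · exact ((emb_pres f h).2).symm

theorem fiber_map (c : ℕ) (H : (n : ℕ) → Fin 4 → SimpleGraph (Fin n))
    (hcc : ∀ n ∈ Set.Icc c (2 * c), ∀ l : Fin 4, CoConnected (H n l))
    (hemb : ∀ n ∈ Set.Icc c (2 * c), ∀ n' ∈ Set.Icc c (2 * c), ∀ l l' : Fin 4,
      (n, l) ≠ (n', l') → ¬ Nonempty (H n l ↪g H n' l'))
    (l : C → Fin 4) (j : C → ℕ) (hj : ∀ a : C, j a ∈ Set.Icc c (2 * c))
    (hcoG' : ∀ a : C, Nonempty (G'.induce {x : V' | π' x = a} ≃g H (j a) (l a)))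
    (hcr' : ∀ x y : V', π' x ≠ π' y → (G'.Adj x y ↔ Q.Adj (π' x) (π' y)))
    (hsingle : ∀ S : Set V', CoConnected (G'.induce S) →
      ∀ u v : V', u ∈ S → v ∈ S → π' u = π' v)
    (f : envGraph G' k x' ↪g envGraph G' k y') :
    ∃ g : C → C,
      (∀ a : C, cellRel Q k (π' x') a → cellRel Q k (π' y') (g a)) ∧
      (∀ a : C, cellRel Q k (π' x') a → j (g a) = j a ∧ l (g a) = l a) ∧
      Set.InjOn g {a : C | cellRel Q k (π' x') a} ∧
      (∀ a b : C, cellRel Q k (π' x') a → cellRel Q k (π' x') b → a ≠ b →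
        (Q.Adj a b ↔ Q.Adj (g a) (g b))) := by
  classical
  have hfc' : ∀ a : C, CoConnected (G'.induce {x | π' x = a}) :=
    fun a => coConnected_iso (hcoG' a).some.symm (hcc (j a) (hj a) (l a))
  have htr := cell_transfer hcr' hfc' k
  have hmem : ∀ u : V', cellRel Q k (π' x') (π' u) → cellRel G' k x' u :=
    fun u hu => htr.2 x' (π' u) hu u rfl
  have hmem2 : ∀ {a : C}, cellRel Q k (π' x') a → ∀ z : V', π' z = a → cellRel G' k x' z :=
    fun {a} ha z hz => hmem z (by rw [hz]; exact ha)
  -- the image of a fiber is contained in a fiber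
  have const : ∀ (u v : V') (hu : cellRel G' k x' u) (hv : cellRel G' k x' v),
      π' u = π' v → π' (f ⟨u, hu⟩).1 = π' (f ⟨v, hv⟩).1 := by
    intro u v hu hv huv
    have hau : cellRel Q k (π' x') (π' u) := htr.1 x' u hu
    set S : Set V' :=
      {w | ∃ (z : V') (hz : cellRel G' k x' z), π' z = π' u ∧ (f ⟨z, hz⟩).1 = w} with hS
    have e : G'.induce {w | π' w = π' u} ≃g G'.induce S := by
      refine ⟨Equiv.ofBijective
        (fun z => ⟨(f ⟨z.1, hmem2 hau z.1 z.2⟩).1, ⟨z.1, hmem2 hau z.1 z.2, z.2, rfl⟩⟩)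
        ⟨?_, ?_⟩, ?_⟩
      · intro z w hzw
        have h1 := congrArg Subtype.val hzw
        have h2 : (⟨z.1, hmem2 hau z.1 z.2⟩ : {w : V' // cellRel G' k x' w}) =
            ⟨w.1, hmem2 hau w.1 w.2⟩ := f.injective (Subtype.ext h1)
        exact Subtype.ext (Subtype.mk_eq_mk.mp h2)
      · rintro ⟨w, z, hz, hza, rfl⟩
        exact ⟨⟨z, hza⟩, rfl⟩
      · intro z w
        exact emb_pres_all f _ _
    have hSco : CoConnected (G'.induce S) := coConnected_iso e (hfc' (π' u))
    exact hsingle S hSco _ _ ⟨u, hu, rfl, rfl⟩ ⟨v, hv, huv.symm, rfl⟩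
  obtain ⟨rep, hrep⟩ := Classical.axiomOfChoice (fiber_nonempty hfc')
  set g : C → C := fun a =>
    if ha : cellRel Q k (π' x') a then π' (f ⟨rep a, hmem2 ha (rep a) (hrep a)⟩).1 else a
    with hgdef
  have hgval : ∀ (a : C) (ha : cellRel Q k (π' x') a),
      g a = π' (f ⟨rep a, hmem2 ha (rep a) (hrep a)⟩).1 := by
    intro a ha
    rw [hgdef]
    exact dif_pos ha
  have hg1 : ∀ (u : V') (hu : cellRel G' k x' u), π' (f ⟨u, hu⟩).1 = g (π' u) := by
    intro u hu
    have ha : cellRel Q k (π' x') (π' u) := htr.1 x' u hu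
    rw [hgval _ ha]
    exact const u (rep (π' u)) hu _ (hrep _).symm
  have hg2 : ∀ a : C, cellRel Q k (π' x') a → cellRel Q k (π' y') (g a) := by
    intro a ha
    rw [hgval a ha]
    exact (cell_transfer hcr' hfc' k).1 y' _ (f ⟨rep a, hmem2 ha (rep a) (hrep a)⟩).2
  -- the fiber-to-fiber embeddings
  have hfibmap : ∀ {a : C} (ha : cellRel Q k (π' x') a) (z : V') (hz : π' z = a),
      π' (f ⟨z, hmem2 ha z hz⟩).1 = g a := by
    intro a ha z hz
    rw [hg1 z (hmem2 ha z hz), hz]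
  have hemb1 : ∀ (a : C), cellRel Q k (π' x') a →
      Nonempty (H (j a) (l a) ↪g H (j (g a)) (l (g a))) := by
    intro a ha
    have emb1 : G'.induce {w : V' | π' w = a} ↪g G'.induce {w : V' | π' w = g a} := by
      refine ⟨⟨fun z => ⟨(f ⟨z.1, hmem2 ha z.1 z.2⟩).1, hfibmap ha z.1 z.2⟩, ?_⟩, ?_⟩
      · intro z w hzw
        have h1 := congrArg Subtype.val hzw
        have h2 : (⟨z.1, hmem2 ha z.1 z.2⟩ : {w : V' // cellRel G' k x' w}) =
            ⟨w.1, hmem2 ha w.1 w.2⟩ := f.injective (Subtype.ext h1)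
        exact Subtype.ext (Subtype.mk_eq_mk.mp h2)
      · intro z w
        exact emb_pres_all f _ _
    exact ⟨((hcoG' (g a)).some.toEmbedding.comp emb1).comp
      (hcoG' a).some.symm.toEmbedding⟩
  have hg3 : ∀ a : C, cellRel Q k (π' x') a → j (g a) = j a ∧ l (g a) = l a := by
    intro a ha
    have heq : (j a, l a) = (j (g a), l (g a)) := by
      by_contra hne
      exact hemb (j a) (hj a) (j (g a)) (hj (g a)) (l a) (l (g a)) hne (hemb1 a ha)
    obtain ⟨h1, h2⟩ := Prod.mk.injEq _ _ _ _ ▸ heq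
    exact ⟨h1.symm, h2.symm⟩
  -- image sets are full fibers
  have himg : ∀ (a : C) (ha : cellRel Q k (π' x') a),
      {w : V' | ∃ (z : V') (hz : π' z = a), (f ⟨z, hmem2 ha z hz⟩).1 = w} =
        {w : V' | π' w = g a} := by
    intro a ha
    set Sa := {w : V' | ∃ (z : V') (hz : π' z = a), (f ⟨z, hmem2 ha z hz⟩).1 = w} with hSa
    have hsub : Sa ⊆ {w : V' | π' w = g a} := by
      rintro w ⟨z, hz, rfl⟩
      exact hfibmap ha z hz
    have hcard1 : Nat.card Sa = j a := by
      have e1 : {z : V' // π' z = a} ≃ ↥Sa := by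
        refine Equiv.ofBijective
          (fun z => ⟨(f ⟨z.1, hmem2 ha z.1 z.2⟩).1, ⟨z.1, z.2, rfl⟩⟩) ⟨?_, ?_⟩
        · intro z w hzw
          have h1 := Subtype.mk_eq_mk.mp hzw
          have h2 : (⟨z.1, hmem2 ha z.1 z.2⟩ : {w : V' // cellRel G' k x' w}) =
              ⟨w.1, hmem2 ha w.1 w.2⟩ := f.injective (Subtype.ext h1)
          exact Subtype.ext (Subtype.mk_eq_mk.mp h2)
        · rintro ⟨w, z, hz, rfl⟩
          exact ⟨⟨z, hz⟩, rfl⟩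
      rw [Nat.card_congr (e1.symm.trans (hcoG' a).some.toEquiv)]
      exact Nat.card_eq_fintype_card.trans (Fintype.card_fin _)
    have hcard2 : Nat.card {w : V' | π' w = g a} = j a := by
      rw [Nat.card_congr (hcoG' (g a)).some.toEquiv, Nat.card_eq_fintype_card,
        Fintype.card_fin, (hg3 a ha).1]
    apply Set.eq_of_subset_of_ncard_le hsub ?_ (Set.toFinite _)
    rw [← Nat.card_coe_set_eq, ← Nat.card_coe_set_eq, hcard1, hcard2]
  have hInj : Set.InjOn g {a : C | cellRel Q k (π' x') a} := by
    intro a ha b hb hgab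
    by_contra hne
    obtain ⟨zw, hzw⟩ : ∃ w : V', π' w = g a := ⟨rep (g a), hrep (g a)⟩
    have hwa : zw ∈ {w : V' | ∃ (z : V') (hz : π' z = a), (f ⟨z, hmem2 ha z hz⟩).1 = w} := by
      rw [himg a ha]; exact hzw
    have hwb : zw ∈ {w : V' | ∃ (z : V') (hz : π' z = b), (f ⟨z, hmem2 hb z hz⟩).1 = w} := by
      rw [himg b hb, ← hgab]; exact hzw
    obtain ⟨z1, hz1, he1⟩ := hwa
    obtain ⟨z2, hz2, he2⟩ := hwb
    have : (⟨z1, hmem2 ha z1 hz1⟩ : {w : V' // cellRel G' k x' w}) = ⟨z2, hmem2 hb z2 hz2⟩ :=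
      f.injective (Subtype.ext (he1.trans he2.symm))
    have hz12 : z1 = z2 := Subtype.mk_eq_mk.mp this
    exact hne (hz1.symm.trans (hz12 ▸ hz2))
  refine ⟨g, hg2, hg3, hInj, ?_⟩
  intro a b ha hb hab
  have hgab : g a ≠ g b := fun e => hab (hInj ha hb e)
  have hur : π' (rep a) ≠ π' (rep b) := by rw [hrep a, hrep b]; exact hab
  have h1 : Q.Adj a b ↔ G'.Adj (rep a) (rep b) := by
    rw [hcr' _ _ hur, hrep a, hrep b]
  have h2 : G'.Adj (rep a) (rep b) ↔
      G'.Adj (f ⟨rep a, hmem2 ha (rep a) (hrep a)⟩).1 (f ⟨rep b, hmem2 hb (rep b) (hrep b)⟩).1 :=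
    (emb_pres_all f _ _).symm
  have h3 : G'.Adj (f ⟨rep a, hmem2 ha (rep a) (hrep a)⟩).1
      (f ⟨rep b, hmem2 hb (rep b) (hrep b)⟩).1 ↔ Q.Adj (g a) (g b) := by
    rw [hcr' _ _ (by rw [hgval a ha, hgval b hb] at hgab; exact hgab),
      ← hgval a ha, ← hgval b hb]
  exact (h1.trans h2).trans h3

end FiberMap
end PaperFO
namespace PaperFO
section Build

variable {W C : Type} {G : SimpleGraph W} {Q : SimpleGraph C} {π : W → C}

theorem build_emb (H : (n : ℕ) → Fin 4 → SimpleGraph (Fin n)) (s : C → ℕ) (l : C → Fin 4)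
    (hco : ∀ a : C, Nonempty (G.induce {x : W | π x = a} ≃g H (s a) (l a)))
    (hfc : ∀ a : C, CoConnected (G.induce {x | π x = a}))
    (hcr : ∀ u v : W, π u ≠ π v → (G.Adj u v ↔ Q.Adj (π u) (π v)))
    (k : ℕ) (x y : W) (g : C → C)
    (hg2 : ∀ a : C, cellRel Q k (π x) a → cellRel Q k (π y) (g a))
    (hg3 : ∀ a : C, cellRel Q k (π x) a → s (g a) = s a ∧ l (g a) = l a)
    (hg4 : Set.InjOn g {a : C | cellRel Q k (π x) a})
    (hg5 : ∀ a b : C, cellRel Q k (π x) a → cellRel Q k (π x) b → a ≠ b →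
      (Q.Adj a b ↔ Q.Adj (g a) (g b))) :
    ∃ f : envGraph G k x ↪g envGraph G k y,
      ∀ w : {u : W // cellRel G k y u}, (∃ a : C, cellRel Q k (π x) a ∧ g a = π w.1) →
        ∃ u, f u = w := by
  classical
  have key : ∀ (a : C), cellRel Q k (π x) a →
      ∃ (ψ : {w : W // π w = a} → {w : W // π w = g a}), Function.Bijective ψ ∧
        ∀ z w : {w : W // π w = a}, (G.Adj (ψ z).1 (ψ w).1 ↔ G.Adj z.1 w.1) := by
    intro a ha
    have E2 : G.induce {w : W | π w = g a} ≃g H (s a) (l a) := by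
      rw [← (hg3 a ha).1, ← (hg3 a ha).2]
      exact (hco (g a)).some
    have E1 : G.induce {w : W | π w = a} ≃g H (s a) (l a) := (hco a).some
    refine ⟨fun z => E2.symm (E1 z), (E1.toEquiv.trans E2.symm.toEquiv).bijective, ?_⟩
    intro z w
    have h1 : (G.induce {w : W | π w = g a}).Adj (E2.symm (E1 z)) (E2.symm (E1 w)) ↔
        (H (s a) (l a)).Adj (E1 z) (E1 w) := E2.symm.map_rel_iff
    have h2 : (H (s a) (l a)).Adj (E1 z) (E1 w) ↔
        (G.induce {w : W | π w = a}).Adj z w := E1.map_rel_iff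
    exact h1.trans h2
  choose ψ hψbij hψadj using key
  have hψπ : ∀ (a : C) (ha : cellRel Q k (π x) a) (z : {w : W // π w = a}),
      π (ψ a ha z).1 = g a := fun a ha z => (ψ a ha z).2
  have tra : ∀ u : {u : W // cellRel G k x u}, cellRel Q k (π x) (π u.1) :=
    fun u => (cell_transfer hcr hfc k).1 x u.1 u.2
  have hcongr : ∀ (a b : C), a = b → ∀ (ha : cellRel Q k (π x) a) (hb : cellRel Q k (π x) b)
      (z : W) (hza : π z = a) (hzb : π z = b), (ψ a ha ⟨z, hza⟩).1 = (ψ b hb ⟨z, hzb⟩).1 := by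
    rintro a b rfl ha hb z hza hzb
    rfl
  have hψinj : ∀ (a : C) (ha : cellRel Q k (π x) a) (z w : {w : W // π w = a}),
      (ψ a ha z).1 = (ψ a ha w).1 → z.1 = w.1 := by
    intro a ha z w h
    exact congrArg Subtype.val ((hψbij a ha).1 (Subtype.ext h))
  -- the vertex map
  have hmemy : ∀ u : {u : W // cellRel G k x u},
      cellRel G k y (ψ (π u.1) (tra u) ⟨u.1, rfl⟩).1 :=
    fun u => (cell_transfer hcr hfc k).2 y (g (π u.1)) (hg2 _ (tra u)) _ (hψπ _ _ _)
  set φ : {u : W // cellRel G k x u} → {u : W // cellRel G k y u} :=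
    fun u => ⟨(ψ (π u.1) (tra u) ⟨u.1, rfl⟩).1, hmemy u⟩ with hφdef
  have hφval : ∀ u : {u : W // cellRel G k x u}, (φ u).1 = (ψ (π u.1) (tra u) ⟨u.1, rfl⟩).1 :=
    fun u => rfl
  have hφπ : ∀ u, π (φ u).1 = g (π u.1) := fun u => hψπ _ _ _
  have hφinj : Function.Injective φ := by
    intro u v h
    have h1 : (φ u).1 = (φ v).1 := congrArg Subtype.val h
    have hgg : g (π u.1) = g (π v.1) := by rw [← hφπ u, ← hφπ v, h1]
    have heq : π u.1 = π v.1 := hg4 (tra u) (tra v) hgg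
    have h2 : (ψ (π v.1) (tra v) ⟨v.1, rfl⟩).1 = (ψ (π u.1) (tra u) ⟨v.1, heq.symm⟩).1 :=
      hcongr _ _ heq.symm _ _ v.1 rfl heq.symm
    have h3 : (ψ (π u.1) (tra u) ⟨u.1, rfl⟩).1 = (ψ (π u.1) (tra u) ⟨v.1, heq.symm⟩).1 := by
      rw [hφval u] at h1
      rw [h1, hφval v, h2]
    exact Subtype.ext (hψinj _ _ _ _ h3)
  have hφadj : ∀ u v : {u : W // cellRel G k x u},
      parityAdj G k (φ u).1 (φ v).1 ↔ parityAdj G k u.1 v.1 := by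
    intro u v
    by_cases heq : π u.1 = π v.1
    · have h2 : (φ v).1 = (ψ (π u.1) (tra u) ⟨v.1, heq.symm⟩).1 :=
        hcongr _ _ heq.symm (tra v) (tra u) v.1 rfl heq.symm
      unfold parityAdj
      rw [hφval u, h2]
      refine and_congr ?_ (by rw [hψadj (π u.1) (tra u) ⟨u.1, rfl⟩ ⟨v.1, heq.symm⟩])
      constructor
      · intro hne he
        exact hne (congrArg (fun z : {w : W // π w = π u.1} => (ψ (π u.1) (tra u) z).1)
          (Subtype.ext he))
      · intro hne he
        exact hne (hψinj _ _ _ _ he)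
    · have hneuv : u.1 ≠ v.1 := fun e => heq (by rw [e])
      have hgne : g (π u.1) ≠ g (π v.1) := fun e => heq (hg4 (tra u) (tra v) e)
      have hneφ : (φ u).1 ≠ (φ v).1 := fun e => hgne (by rw [← hφπ u, ← hφπ v, e])
      have hπφ : π (φ u).1 ≠ π (φ v).1 := by rw [hφπ u, hφπ v]; exact hgne
      have hadj : G.Adj (φ u).1 (φ v).1 ↔ G.Adj u.1 v.1 := by
        rw [hcr _ _ hπφ, hφπ u, hφπ v, hcr _ _ heq]
        exact (hg5 _ _ (tra u) (tra v) heq).symm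
      unfold parityAdj
      rw [hadj]
      exact and_congr (iff_of_true hneφ hneuv) Iff.rfl
  refine ⟨⟨⟨φ, hφinj⟩, fun {u v} => hφadj u v⟩, ?_⟩
  rintro w ⟨a, ha, hga⟩
  obtain ⟨z, hz⟩ := (hψbij a ha).2 ⟨w.1, hga.symm⟩
  have hmx : cellRel G k x z.1 :=
    (cell_transfer hcr hfc k).2 x a ha z.1 z.2
  refine ⟨⟨z.1, hmx⟩, Subtype.ext ?_⟩
  show (φ ⟨z.1, hmx⟩).1 = w.1
  have h1 : (φ ⟨z.1, hmx⟩).1 = (ψ a ha ⟨z.1, z.2⟩).1 :=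
    hcongr _ _ z.2 _ _ z.1 rfl z.2
  rw [h1]
  have : (ψ a ha ⟨z.1, z.2⟩) = ψ a ha z := by congr 1
  rw [this, hz]

theorem build_iso (H : (n : ℕ) → Fin 4 → SimpleGraph (Fin n)) (s : C → ℕ) (l : C → Fin 4)
    (hco : ∀ a : C, Nonempty (G.induce {x : W | π x = a} ≃g H (s a) (l a)))
    (hfc : ∀ a : C, CoConnected (G.induce {x | π x = a}))
    (hcr : ∀ u v : W, π u ≠ π v → (G.Adj u v ↔ Q.Adj (π u) (π v)))
    (k : ℕ) (x y : W) (g : C → C)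
    (hg2 : ∀ a : C, cellRel Q k (π x) a → cellRel Q k (π y) (g a))
    (hg3 : ∀ a : C, cellRel Q k (π x) a → s (g a) = s a ∧ l (g a) = l a)
    (hg4 : Set.InjOn g {a : C | cellRel Q k (π x) a})
    (hg5 : ∀ a b : C, cellRel Q k (π x) a → cellRel Q k (π x) b → a ≠ b →
      (Q.Adj a b ↔ Q.Adj (g a) (g b)))
    (hg6 : ∀ b : C, cellRel Q k (π y) b → ∃ a : C, cellRel Q k (π x) a ∧ g a = b) :
    Nonempty (envGraph G k x ≃g envGraph G k y) := by
  obtain ⟨f, hf⟩ := build_emb H s l hco hfc hcr k x y g hg2 hg3 hg4 hg5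
  have hsurj : Function.Surjective f := by
    intro w
    exact hf w (hg6 (π w.1) ((cell_transfer hcr hfc k).1 y w.1 w.2))
  exact ⟨⟨Equiv.ofBijective (fun u => f u) ⟨f.injective, hsurj⟩, fun {u v} => f.map_rel_iff⟩⟩

end Build
end PaperFO
namespace PaperFO
section Cards

variable {W C : Type} {G : SimpleGraph W} {Q : SimpleGraph C} {π : W → C}

lemma induce_reachable {G : SimpleGraph W} {S : Set W} {u v : ↥S}
    (h : (G.induce S).Reachable u v) : G.Reachable u.1 v.1 := by
  obtain ⟨w⟩ := h
  induction w with
  | nil => exact SimpleGraph.Reachable.refl _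
  | @cons a b c h p ih => exact (SimpleGraph.Adj.reachable (by exact h)).trans ih

lemma proj_reach (hcr : ∀ u v : W, π u ≠ π v → (G.Adj u v ↔ Q.Adj (π u) (π v)))
    {x y : W} (h : G.Reachable x y) : Relation.ReflTransGen Q.Adj (π x) (π y) := by
  obtain ⟨w⟩ := h
  induction w with
  | nil => exact Relation.ReflTransGen.refl
  | @cons a b c h p ih =>
      by_cases he : π a = π b
      · exact he ▸ ih
      · exact Relation.ReflTransGen.head ((hcr a b he).mp h) ih

theorem card_cell [Fintype W] (hcr : ∀ u v : W, π u ≠ π v → (G.Adj u v ↔ Q.Adj (π u) (π v)))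
    (hfc : ∀ a : C, CoConnected (G.induce {x | π x = a}))
    (c : ℕ) (H : (n : ℕ) → Fin 4 → SimpleGraph (Fin n)) (l : C → Fin 4)
    (hco : ∀ a : C, Nonempty (G.induce {x : W | π x = a} ≃g H c (l a)))
    (k : ℕ) (x : W) :
    Nat.card {u : W // cellRel G k x u} =
      Nat.card {a : C // cellRel Q k (π x) a} * c := by
  classical
  have e1 : {u : W // cellRel G k x u} ≃ {u : W // cellRel Q k (π x) (π u)} :=
    Equiv.subtypeEquivRight (fun u => cellRel_iff hcr hfc k x u)
  set T := {u : W // cellRel Q k (π x) (π u)}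
  set D := {a : C // cellRel Q k (π x) a}
  set F : T → D := fun u => ⟨π u.1, u.2⟩ with hF
  have e2 : (Σ d : D, {t : T // F t = d}) ≃ T := Equiv.sigmaFiberEquiv F
  have e3 : ∀ d : D, {t : T // F t = d} ≃ {w : W // π w = d.1} := by
    intro d
    refine ⟨fun t => ⟨t.1.1, congrArg Subtype.val t.2⟩,
      fun w => ⟨⟨w.1, by rw [w.2]; exact d.2⟩, Subtype.ext w.2⟩, ?_, ?_⟩
    · intro t
      exact Subtype.ext (Subtype.ext rfl)
    · intro w
      exact Subtype.ext rfl
  have e4 : (Σ d : D, {t : T // F t = d}) ≃ D × Fin c :=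
    (Equiv.sigmaCongrRight (fun d => (e3 d).trans (hco d.1).some.toEquiv)).trans
      (Equiv.sigmaEquivProd D (Fin c))
  have := Nat.card_congr ((e1.trans e2.symm).trans e4)
  rw [this, Nat.card_prod]
  congr 1
  exact Nat.card_eq_fintype_card.trans (Fintype.card_fin _)

end Cards
end PaperFO

namespace PaperFO

theorem statement_18 {V V' : Type} [Fintype V] [Fintype V'] (c i : ℕ) (hc : 1 ≤ c)
    (H : (j : ℕ) → Fin 4 → SimpleGraph (Fin j))
    (hcc : ∀ j ∈ Set.Icc c (2 * c), ∀ l : Fin 4, CoConnected (H j l))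
    (hemb : ∀ j ∈ Set.Icc c (2 * c), ∀ j' ∈ Set.Icc c (2 * c), ∀ l l' : Fin 4,
      (j, l) ≠ (j', l') → ¬ Nonempty (H j l ↪g H j' l'))
    (G : SimpleGraph V) (G' : SimpleGraph V')
    (hGconn : G.Connected) (hGunif : Uniform G) (hGincl : InclusionFree G)
    (hGrk : rank G = i)
    (C : Type) (Q : SimpleGraph C) (π : V → C) (π' : V' → C)
    (l : C → Fin 4) (j : C → ℕ) (hj : ∀ a : C, j a ∈ Set.Icc c (2 * c))
    (hfib : ∀ a : C, IsCocomponent G {x : V | π x = a})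
    (hcoG : ∀ a : C, Nonempty (G.induce {x : V | π x = a} ≃g H c (l a)))
    (hcross : ∀ x y : V, π x ≠ π y → (G.Adj x y ↔ Q.Adj (π x) (π y)))
    (hcoG' : ∀ a : C, Nonempty (G'.induce {x : V' | π' x = a} ≃g H (j a) (l a)))
    (hcross' : ∀ x y : V', π' x ≠ π' y → (G'.Adj x y ↔ Q.Adj (π' x) (π' y))) :
    G'.Connected ∧ Uniform G' ∧ InclusionFree G' ∧ rank G' = i := by
  classical
  have hfc : ∀ a : C, CoConnected (G.induce {x : V | π x = a}) := fun a => (hfib a).1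
  have hfc' : ∀ a : C, CoConnected (G'.induce {x : V' | π' x = a}) :=
    fun a => coConnected_iso (hcoG' a).some.symm (hcc (j a) (hj a) (l a))
  have hsurj : ∀ a : C, ∃ x : V, π x = a := fiber_nonempty hfc
  have hsurj' : ∀ a : C, ∃ x : V', π' x = a := fiber_nonempty hfc'
  letI : Finite C := Finite.of_surjective π (fun a => hsurj a)
  have hrk : rank G' = rank G := by
    rw [rank_eq_quot hcross' hfc', rank_eq_quot hcross hfc]
  -- connectivity
  have hQreach : ∀ a b : C, Relation.ReflTransGen Q.Adj a b := by
    intro a b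
    obtain ⟨xa, hxa⟩ := hsurj a
    obtain ⟨xb, hxb⟩ := hsurj b
    have := proj_reach hcross (hGconn.preconnected xa xb)
    rwa [hxa, hxb] at this
  have hconn' : G'.Connected := by
    rw [SimpleGraph.connected_iff]
    constructor
    · intro u v
      have key : ∀ b : C, Relation.ReflTransGen Q.Adj (π' u) b →
          ∀ z : V', π' z = b → G'.Reachable u z := by
        intro b hb
        induction hb with
        | refl =>
            intro z hz
            exact induce_reachable
              ((hfc' (π' u)).1.preconnected (⟨u, rfl⟩ : {x | π' x = π' u}) ⟨z, hz⟩)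
        | @tail p q hr step ih =>
            intro z hz
            obtain ⟨w, hw⟩ := hsurj' p
            have h1 := ih w hw
            have hadj : G'.Adj w z := by
              rw [hcross' w z (by rw [hw, hz]; exact step.ne), hw, hz]
              exact step
            exact h1.trans hadj.reachable
      exact key (π' v) (hQreach _ _) v rfl
    · obtain ⟨x0⟩ := hGconn.nonempty
      obtain ⟨u0, _⟩ := hsurj' (π x0)
      exact ⟨u0⟩
  -- uniformity
  have hUnif : Uniform G' := by
    by_cases h0 : rank G = 0
    · left
      rw [hrk, h0]
    · rcases hGunif with h0' | hU
      · left
        rw [hrk, h0']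
      · right
        intro x'
        obtain ⟨x, hx⟩ := hsurj (π' x')
        obtain ⟨y, h1, h2⟩ := hU x
        obtain ⟨y', hy'⟩ := hsurj' (π y)
        refine ⟨y', ?_, ?_⟩
        · rw [hrk]
          have := (cellRel_iff hcross hfc (rank G - 1) x y).mp h1
          rw [hx] at this
          exact (cellRel_iff hcross' hfc' (rank G - 1) x' y').mpr (by rw [hy']; exact this)
        · rw [hrk]
          intro hcon
          apply h2
          have := (cellRel_iff hcross' hfc' (rank G) x' y').mp hcon
          rw [← hx, hy'] at this
          exact (cellRel_iff hcross hfc (rank G) x y).mpr this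
  -- inclusion-freeness
  have hsingle : ∀ S : Set V', CoConnected (G'.induce S) →
      ∀ u v : V', u ∈ S → v ∈ S → π' u = π' v :=
    fun S hS u v hu hv => coconn_subset_fiber hcross hfib hcross' hS u v hu hv
  have hIF : InclusionFree G' := by
    intro k hk
    have hkG : k ≤ rank G := by rw [← hrk]; exact hk
    constructor
    · -- no two isomorphic split cells
      intro x' y' h1 h2 hF
      obtain ⟨F⟩ := hF
      obtain ⟨g, hg2, hg3, hg4, hg5⟩ :=
        fiber_map c H hcc hemb l j hj hcoG' hcross' hsingle F.toEmbedding
      obtain ⟨g2, hh2, hh3, hh4, hh5⟩ :=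
        fiber_map c H hcc hemb l j hj hcoG' hcross' hsingle F.symm.toEmbedding
      set gg : {a : C // cellRel Q (k + 1) (π' x') a} → {a : C // cellRel Q (k + 1) (π' y') a} :=
        fun a => ⟨g a.1, hg2 a.1 a.2⟩ with hgg
      set gg2 : {a : C // cellRel Q (k + 1) (π' y') a} → {a : C // cellRel Q (k + 1) (π' x') a} :=
        fun a => ⟨g2 a.1, hh2 a.1 a.2⟩ with hgg2
      have hgginj : Function.Injective gg :=
        fun a b hab => Subtype.ext (hg4 a.2 b.2 (Subtype.mk_eq_mk.mp hab))
      have hgg2inj : Function.Injective gg2 :=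
        fun a b hab => Subtype.ext (hh4 a.2 b.2 (Subtype.mk_eq_mk.mp hab))
      have hcards : Nat.card {a : C // cellRel Q (k + 1) (π' x') a} =
          Nat.card {a : C // cellRel Q (k + 1) (π' y') a} :=
        le_antisymm (Nat.card_le_card_of_injective gg hgginj)
          (Nat.card_le_card_of_injective gg2 hgg2inj)
      have hggbij : Function.Bijective gg :=
        (Nat.bijective_iff_injective_and_card gg).mpr ⟨hgginj, hcards⟩
      have hg6 : ∀ b : C, cellRel Q (k + 1) (π' y') b →
          ∃ a : C, cellRel Q (k + 1) (π' x') a ∧ g a = b := by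
        intro b hb
        obtain ⟨a, ha⟩ := hggbij.2 ⟨b, hb⟩
        exact ⟨a.1, a.2, Subtype.mk_eq_mk.mp ha⟩
      obtain ⟨x, hx⟩ := hsurj (π' x')
      obtain ⟨y, hy⟩ := hsurj (π' y')
      have hiso : Nonempty (envGraph G (k + 1) x ≃g envGraph G (k + 1) y) := by
        refine build_iso H (fun _ => c) l hcoG hfc hcross (k + 1) x y g ?_ ?_ ?_ ?_ ?_
        · rw [hx, hy]; exact hg2
        · rw [hx]; exact fun a ha => ⟨rfl, (hg3 a ha).2⟩
        · rw [hx]; exact hg4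
        · rw [hx]; exact hg5
        · rw [hx, hy]; exact hg6
      have hc1 : cellRel G k x y := by
        refine (cellRel_iff hcross hfc k x y).mpr ?_
        rw [hx, hy]
        exact (cellRel_iff hcross' hfc' k x' y').mp h1
      have hc2 : ¬ cellRel G (k + 1) x y := by
        intro hcon
        apply h2
        have := (cellRel_iff hcross hfc (k + 1) x y).mp hcon
        rw [hx, hy] at this
        exact (cellRel_iff hcross' hfc' (k + 1) x' y').mpr this
      exact (hGincl k hkG).1 x y hc1 hc2 hiso
    · -- embeddable implies isomorphic
      intro x' y' hEmb
      obtain ⟨f⟩ := hEmb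
      obtain ⟨g, hg2, hg3, hg4, hg5⟩ :=
        fiber_map c H hcc hemb l j hj hcoG' hcross' hsingle f
      obtain ⟨x, hx⟩ := hsurj (π' x')
      obtain ⟨y, hy⟩ := hsurj (π' y')
      have hembG : ∃ fG : envGraph G k x ↪g envGraph G k y,
          ∀ w : {u : V // cellRel G k y u},
            (∃ a : C, cellRel Q k (π x) a ∧ g a = π w.1) → ∃ u, fG u = w := by
        refine build_emb H (fun _ => c) l hcoG hfc hcross k x y g ?_ ?_ ?_ ?_
        · rw [hx, hy]; exact hg2
        · rw [hx]; exact fun a ha => ⟨rfl, (hg3 a ha).2⟩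
        · rw [hx]; exact hg4
        · rw [hx]; exact hg5
      obtain ⟨fG, -⟩ := hembG
      obtain ⟨eG⟩ := (hGincl k hkG).2 x y ⟨fG⟩
      have hcardcell := Nat.card_congr eG.toEquiv
      rw [card_cell hcross hfc c H l hcoG k x, card_cell hcross hfc c H l hcoG k y] at hcardcell
      have hD : Nat.card {a : C // cellRel Q k (π x) a} =
          Nat.card {a : C // cellRel Q k (π y) a} :=
        Nat.eq_of_mul_eq_mul_right hc hcardcell
      rw [hx, hy] at hD
      set gg : {a : C // cellRel Q k (π' x') a} → {a : C // cellRel Q k (π' y') a} :=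
        fun a => ⟨g a.1, hg2 a.1 a.2⟩ with hgg
      have hgginj : Function.Injective gg :=
        fun a b hab => Subtype.ext (hg4 a.2 b.2 (Subtype.mk_eq_mk.mp hab))
      have hggbij : Function.Bijective gg :=
        (Nat.bijective_iff_injective_and_card gg).mpr ⟨hgginj, hD⟩
      have hg6 : ∀ b : C, cellRel Q k (π' y') b →
          ∃ a : C, cellRel Q k (π' x') a ∧ g a = b := by
        intro b hb
        obtain ⟨a, ha⟩ := hggbij.2 ⟨b, hb⟩
        exact ⟨a.1, a.2, Subtype.mk_eq_mk.mp ha⟩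
      exact build_iso H j l hcoG' hfc' hcross' k x' y' g hg2 hg3 hg4 hg5 hg6
  exact ⟨hconn', hUnif, hIF, hrk.trans hGrk⟩

end PaperFO
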